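/- The number of alternating Motzkin paths of length 2k with exactly a rises equals the Narayana number N(k,a) = (1/(a+1)) * C(k,a) * C(k-1,a). -/

import Mathlib

/-- A step encoding: `p i : Fin 3`, with step value `(p i : ℤ) - 1 ∈ {-1, 0, 1}`
(fall, level, rise).  Steps are 1-indexed in the paper, so the step at index
`i : Fin (2*k)` is step number `i+1`; "rises only on even steps" means
`(p i : ℤ) - 1 = 1 → Odd i.1`, and "falls only on odd steps" means
`(p i : ℤ) - 1 = -1 → Even i.1`.  The path must stay at nonnegative height and
return to height 0. -/
def IsAltMotzkin (k : ℕ) (p : Fin (2 * k) → Fin 3) : Prop :=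
  (∀ i, ((p i : ℤ) - 1 = 1 → Odd i.1) ∧ ((p i : ℤ) - 1 = -1 → Even i.1)) ∧
  (∀ j : Fin (2 * k), 0 ≤ ∑ i ∈ Finset.univ.filter (fun i => i ≤ j), ((p i : ℤ) - 1)) ∧
  (∑ i, ((p i : ℤ) - 1)) = 0

namespace AltM
open Finset

def Fle (S : Finset ℕ) (t : ℕ) : ℕ := (S.filter (fun x => x ≤ t)).card
def Rlt (S : Finset ℕ) (t : ℕ) : ℕ := (S.filter (fun x => x < t)).card

lemma Fle_eq_Rlt_succ (S : Finset ℕ) (t : ℕ) : Fle S t = Rlt S (t+1) := by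
  unfold Fle Rlt; congr 1; apply filter_congr; intro x _; simp [Nat.lt_succ_iff]

lemma Rlt_succ (S : Finset ℕ) (t : ℕ) :
    Rlt S (t+1) = Rlt S t + (if t ∈ S then 1 else 0) := by
  unfold Rlt
  have h1 : S.filter (fun x => x < t+1) = S.filter (fun x => x < t) ∪ S.filter (fun x => x = t) := by
    ext x; simp only [mem_filter, mem_union]; constructor
    · rintro ⟨h, h2⟩; rcases Nat.lt_succ_iff_lt_or_eq.mp h2 with h3 | h3
      · exact Or.inl ⟨h, h3⟩
      · exact Or.inr ⟨h, h3⟩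
    · rintro (⟨h, h2⟩ | ⟨h, h2⟩) <;> exact ⟨h, by omega⟩
  rw [h1, card_union_of_disjoint, filter_eq']
  · split <;> simp
  · rw [Finset.disjoint_left]; intro x hx hx2
    simp only [mem_filter] at hx hx2; omega

lemma Rlt_zero (S : Finset ℕ) : Rlt S 0 = 0 := by
  unfold Rlt; rw [filter_false_of_mem] <;> simp

lemma Fle_succ (S : Finset ℕ) (t : ℕ) :
    Fle S (t+1) = Fle S t + (if t+1 ∈ S then 1 else 0) := by
  rw [Fle_eq_Rlt_succ, Fle_eq_Rlt_succ, Rlt_succ]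

lemma Fle_eq_Rlt_add (S : Finset ℕ) (t : ℕ) :
    Fle S t = Rlt S t + (if t ∈ S then 1 else 0) := by
  rw [Fle_eq_Rlt_succ, Rlt_succ]

lemma Rlt_mono (S : Finset ℕ) {t t' : ℕ} (h : t ≤ t') : Rlt S t ≤ Rlt S t' := by
  apply card_le_card; intro x hx; simp only [mem_filter] at hx ⊢; exact ⟨hx.1, by omega⟩

lemma Fle_mono (S : Finset ℕ) {t t' : ℕ} (h : t ≤ t') : Fle S t ≤ Fle S t' := by
  apply card_le_card; intro x hx; simp only [mem_filter] at hx ⊢; exact ⟨hx.1, by omega⟩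

lemma Rlt_le_card (S : Finset ℕ) (t : ℕ) : Rlt S t ≤ S.card := card_le_card (filter_subset _ _)

lemma Fle_le_card (S : Finset ℕ) (t : ℕ) : Fle S t ≤ S.card := card_le_card (filter_subset _ _)

lemma Rlt_eq_card (S : Finset ℕ) (t : ℕ) (h : ∀ x ∈ S, x < t) : Rlt S t = S.card := by
  unfold Rlt; rw [filter_true_of_mem h]

lemma Fle_eq_card (S : Finset ℕ) (t : ℕ) (h : ∀ x ∈ S, x ≤ t) : Fle S t = S.card := by
  unfold Fle; rw [filter_true_of_mem h]

lemma Fle_zero_le_one (S : Finset ℕ) : Fle S 0 ≤ 1 := by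
  have : S.filter (fun x => x ≤ 0) ⊆ {0} := by intro x hx; simp only [mem_filter] at hx; simp; omega
  calc Fle S 0 ≤ ({0} : Finset ℕ).card := card_le_card this
    _ = 1 := card_singleton 0

lemma Rlt_add_ge (S : Finset ℕ) (j : ℕ) :
    Rlt S j + (S.filter (fun x => j ≤ x)).card = S.card := by
  have h1 := Finset.card_filter_add_card_filter_not (s := S) (p := fun x => x < j)
  have h2 : S.filter (fun x => ¬ x < j) = S.filter (fun x => j ≤ x) := by
    apply filter_congr; intro x _; simp [Nat.not_lt]
  rw [h2] at h1; unfold Rlt; omega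

lemma Fle_add_gt (S : Finset ℕ) (j : ℕ) :
    Fle S j + (S.filter (fun x => j+1 ≤ x)).card = S.card := by
  have h1 := Finset.card_filter_add_card_filter_not (s := S) (p := fun x => x ≤ j)
  have h2 : S.filter (fun x => ¬ x ≤ j) = S.filter (fun x => j+1 ≤ x) := by
    apply filter_congr; intro x _; omega
  rw [h2] at h1; unfold Fle; omega


/-! ### The reflection map -/

def reflMap (j : ℕ) (z : Finset ℕ × Finset ℕ) : Finset ℕ × Finset ℕ :=
  (z.1.filter (fun x => x < j) ∪ (z.2.filter (fun x => j+1 ≤ x)).image (fun x => x - 1),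
   z.2.filter (fun x => x ≤ j) ∪ (z.1.filter (fun x => j ≤ x)).image (fun x => x + 1))

lemma sub_one_injOn (s : Finset ℕ) (h : ∀ x ∈ s, 1 ≤ x) :
    Set.InjOn (fun x => x - 1) s := by
  intro x hx y hy hxy
  have := h x hx; have := h y hy; simp at hxy; omega

lemma add_one_inj : Function.Injective (fun x : ℕ => x + 1) := by
  intro x y h; simpa using h

lemma disj_fst (z : Finset ℕ × Finset ℕ) (j : ℕ) :
    Disjoint (z.1.filter (fun x => x < j)) ((z.2.filter (fun x => j+1 ≤ x)).image (fun x => x - 1)) := by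
  rw [Finset.disjoint_left]
  intro x hx hx2
  simp only [mem_filter, mem_image] at hx hx2
  obtain ⟨y, ⟨_, hy⟩, rfl⟩ := hx2; omega

lemma disj_snd (z : Finset ℕ × Finset ℕ) (j : ℕ) :
    Disjoint (z.2.filter (fun x => x ≤ j)) ((z.1.filter (fun x => j ≤ x)).image (fun x => x + 1)) := by
  rw [Finset.disjoint_left]
  intro x hx hx2
  simp only [mem_filter, mem_image] at hx hx2
  obtain ⟨y, ⟨_, hy⟩, hxy⟩ := hx2
  replace hxy : y + 1 = x := hxy
  omega

lemma card_reflMap_fst (z : Finset ℕ × Finset ℕ) (j : ℕ) :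
    (reflMap j z).1.card + Fle z.2 j = Rlt z.1 j + z.2.card := by
  have hc : (reflMap j z).1.card
      = Rlt z.1 j + ((z.2.filter (fun x => j+1 ≤ x)).image (fun x => x - 1)).card := by
    rw [show (reflMap j z).1 = _ ∪ _ from rfl, card_union_of_disjoint (disj_fst z j)]; rfl
  have hi : ((z.2.filter (fun x => j+1 ≤ x)).image (fun x => x - 1)).card
      = (z.2.filter (fun x => j+1 ≤ x)).card := by
    apply Finset.card_image_of_injOn
    apply sub_one_injOn
    intro x hx; simp only [mem_filter] at hx; omega
  have := Fle_add_gt z.2 j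
  omega

lemma card_reflMap_snd (z : Finset ℕ × Finset ℕ) (j : ℕ) :
    (reflMap j z).2.card + Rlt z.1 j = Fle z.2 j + z.1.card := by
  have hc : (reflMap j z).2.card
      = Fle z.2 j + ((z.1.filter (fun x => j ≤ x)).image (fun x => x + 1)).card := by
    rw [show (reflMap j z).2 = _ ∪ _ from rfl, card_union_of_disjoint (disj_snd z j)]; rfl
  have hi : ((z.1.filter (fun x => j ≤ x)).image (fun x => x + 1)).card
      = (z.1.filter (fun x => j ≤ x)).card := by
    exact Finset.card_image_of_injective _ add_one_inj
  have := Rlt_add_ge z.1 j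
  omega

lemma filter_le_split (S : Finset ℕ) {j t : ℕ} (h : j ≤ t) :
    Fle S j + (S.filter (fun x => j+1 ≤ x ∧ x ≤ t)).card = Fle S t := by
  have hp : S.filter (fun x => x ≤ t)
      = S.filter (fun x => x ≤ j) ∪ S.filter (fun x => j+1 ≤ x ∧ x ≤ t) := by
    ext x; simp only [mem_filter, mem_union]
    constructor
    · rintro ⟨h1, h2⟩
      by_cases hc : x ≤ j
      · exact Or.inl ⟨h1, hc⟩
      · exact Or.inr ⟨h1, by omega, h2⟩
    · rintro (⟨h1, h2⟩ | ⟨h1, h2, h3⟩)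
      · exact ⟨h1, by omega⟩
      · exact ⟨h1, h3⟩
  have hd : Disjoint (S.filter (fun x => x ≤ j)) (S.filter (fun x => j+1 ≤ x ∧ x ≤ t)) := by
    rw [Finset.disjoint_left]; intro x hx hx2
    simp only [mem_filter] at hx hx2; omega
  unfold Fle
  rw [hp, card_union_of_disjoint hd]

lemma filter_lt_split (S : Finset ℕ) {j t : ℕ} (h : j ≤ t) :
    Rlt S j + (S.filter (fun x => j ≤ x ∧ x < t)).card = Rlt S t := by
  have hp : S.filter (fun x => x < t)
      = S.filter (fun x => x < j) ∪ S.filter (fun x => j ≤ x ∧ x < t) := by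
    ext x; simp only [mem_filter, mem_union]
    constructor
    · rintro ⟨h1, h2⟩
      by_cases hc : x < j
      · exact Or.inl ⟨h1, hc⟩
      · exact Or.inr ⟨h1, by omega, h2⟩
    · rintro (⟨h1, h2⟩ | ⟨h1, h2, h3⟩)
      · exact ⟨h1, by omega⟩
      · exact ⟨h1, h3⟩
  have hd : Disjoint (S.filter (fun x => x < j)) (S.filter (fun x => j ≤ x ∧ x < t)) := by
    rw [Finset.disjoint_left]; intro x hx hx2
    simp only [mem_filter] at hx hx2; omega
  unfold Rlt
  rw [hp, card_union_of_disjoint hd]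

lemma Rlt_reflMap_fst (z : Finset ℕ × Finset ℕ) {j t : ℕ} (h : j ≤ t) :
    Rlt (reflMap j z).1 t + Fle z.2 j = Rlt z.1 j + Fle z.2 t := by
  have hsplit : (reflMap j z).1.filter (fun x => x < t)
      = z.1.filter (fun x => x < j)
        ∪ (z.2.filter (fun x => j+1 ≤ x ∧ x ≤ t)).image (fun x => x - 1) := by
    rw [show (reflMap j z).1 = _ ∪ _ from rfl, filter_union]
    congr 1
    · ext x; simp only [mem_filter]
      constructor
      · rintro ⟨⟨h1, h2⟩, _⟩; exact ⟨h1, h2⟩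
      · rintro ⟨h1, h2⟩; exact ⟨⟨h1, h2⟩, by omega⟩
    · ext y; simp only [mem_filter, mem_image]
      constructor
      · rintro ⟨⟨x, ⟨hx1, hx2⟩, hxe⟩, hlt⟩
        exact ⟨x, ⟨hx1, hx2, by omega⟩, hxe⟩
      · rintro ⟨x, ⟨hx1, hx2, hx3⟩, hxe⟩
        exact ⟨⟨x, ⟨hx1, hx2⟩, hxe⟩, by omega⟩
  have hd : Disjoint (z.1.filter (fun x => x < j))
      ((z.2.filter (fun x => j+1 ≤ x ∧ x ≤ t)).image (fun x => x - 1)) := by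
    rw [Finset.disjoint_left]; intro x hx hx2
    simp only [mem_filter, mem_image] at hx hx2
    obtain ⟨y, ⟨_, hy, _⟩, hye⟩ := hx2; omega
  have hi : ((z.2.filter (fun x => j+1 ≤ x ∧ x ≤ t)).image (fun x => x - 1)).card
      = (z.2.filter (fun x => j+1 ≤ x ∧ x ≤ t)).card := by
    apply Finset.card_image_of_injOn
    apply sub_one_injOn
    intro x hx; simp only [mem_filter] at hx; omega
  have hRlt : Rlt (reflMap j z).1 t
      = Rlt z.1 j + (z.2.filter (fun x => j+1 ≤ x ∧ x ≤ t)).card := by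
    unfold Rlt at *
    rw [hsplit, card_union_of_disjoint hd, hi]
  have := filter_le_split z.2 h
  omega

lemma Fle_reflMap_snd (z : Finset ℕ × Finset ℕ) {j t : ℕ} (h : j ≤ t) :
    Fle (reflMap j z).2 t + Rlt z.1 j = Fle z.2 j + Rlt z.1 t := by
  have hsplit : (reflMap j z).2.filter (fun x => x ≤ t)
      = z.2.filter (fun x => x ≤ j)
        ∪ (z.1.filter (fun x => j ≤ x ∧ x < t)).image (fun x => x + 1) := by
    rw [show (reflMap j z).2 = _ ∪ _ from rfl, filter_union]
    congr 1
    · ext x; simp only [mem_filter]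
      constructor
      · rintro ⟨⟨h1, h2⟩, _⟩; exact ⟨h1, h2⟩
      · rintro ⟨h1, h2⟩; exact ⟨⟨h1, h2⟩, by omega⟩
    · ext y; simp only [mem_filter, mem_image]
      constructor
      · rintro ⟨⟨x, ⟨hx1, hx2⟩, hxe⟩, hlt⟩
        exact ⟨x, ⟨hx1, hx2, by omega⟩, hxe⟩
      · rintro ⟨x, ⟨hx1, hx2, hx3⟩, hxe⟩
        exact ⟨⟨x, ⟨hx1, hx2⟩, hxe⟩, by omega⟩
  have hd : Disjoint (z.2.filter (fun x => x ≤ j))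
      ((z.1.filter (fun x => j ≤ x ∧ x < t)).image (fun x => x + 1)) := by
    rw [Finset.disjoint_left]; intro x hx hx2
    simp only [mem_filter, mem_image] at hx hx2
    obtain ⟨y, ⟨_, hy, _⟩, hye⟩ := hx2; omega
  have hi : ((z.1.filter (fun x => j ≤ x ∧ x < t)).image (fun x => x + 1)).card
      = (z.1.filter (fun x => j ≤ x ∧ x < t)).card :=
    Finset.card_image_of_injective _ add_one_inj
  have hFle : Fle (reflMap j z).2 t
      = Fle z.2 j + (z.1.filter (fun x => j ≤ x ∧ x < t)).card := by
    unfold Fle at *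
    rw [hsplit, card_union_of_disjoint hd, hi]
  have := filter_lt_split z.1 h
  omega

lemma reflMap_invol (j : ℕ) (z : Finset ℕ × Finset ℕ) : reflMap j (reflMap j z) = z := by
  have h1 : (reflMap j (reflMap j z)).1 = z.1 := by
    ext x
    simp only [reflMap, mem_union, mem_filter, mem_image]
    constructor
    · rintro (⟨hx, hlt⟩ | ⟨y, ⟨hy, hy2⟩, hye⟩)
      · rcases hx with ⟨hx, _⟩ | ⟨w, ⟨hw, hw2⟩, hwe⟩
        · exact hx
        · omega
      · rcases hy with ⟨hy, hle⟩ | ⟨w, ⟨hw, hw2⟩, hwe⟩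
        · omega
        · have : w = x := by omega
          subst this; exact hw
    · intro hx
      by_cases hc : x < j
      · exact Or.inl ⟨Or.inl ⟨hx, hc⟩, hc⟩
      · exact Or.inr ⟨x + 1, ⟨Or.inr ⟨x, ⟨hx, by omega⟩, rfl⟩, by omega⟩, by omega⟩
  have h2 : (reflMap j (reflMap j z)).2 = z.2 := by
    ext x
    simp only [reflMap, mem_union, mem_filter, mem_image]
    constructor
    · rintro (⟨hx, hle⟩ | ⟨y, ⟨hy, hy2⟩, hye⟩)
      · rcases hx with ⟨hx, _⟩ | ⟨w, ⟨hw, hw2⟩, hwe⟩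
        · exact hx
        · omega
      · rcases hy with ⟨hy, hlt⟩ | ⟨w, ⟨hw, hw2⟩, hwe⟩
        · omega
        · have : w = x := by omega
          subst this; exact hw
    · intro hx
      by_cases hc : x ≤ j
      · exact Or.inl ⟨Or.inl ⟨hx, hc⟩, hc⟩
      · exact Or.inr ⟨x - 1, ⟨Or.inr ⟨x, ⟨hx, by omega⟩, rfl⟩, by omega⟩, by omega⟩
  exact Prod.ext h1 h2

lemma reflMap_sub_fst (z : Finset ℕ × Finset ℕ) (j m n : ℕ)
    (h1 : z.1 ⊆ range m) (h2 : z.2 ⊆ range (m+1)) :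
    (reflMap j z).1 ⊆ range m := by
  intro x hx
  simp only [reflMap, mem_union, mem_filter, mem_image] at hx
  rcases hx with ⟨hx, _⟩ | ⟨y, ⟨hy, hy2⟩, hye⟩
  · exact h1 hx
  · have := h2 hy; simp only [mem_range] at *; omega

lemma reflMap_sub_snd (z : Finset ℕ × Finset ℕ) (j m n : ℕ)
    (h1 : z.1 ⊆ range m) (h2 : z.2 ⊆ range (m+1)) :
    (reflMap j z).2 ⊆ range (m+1) := by
  intro x hx
  simp only [reflMap, mem_union, mem_filter, mem_image] at hx
  rcases hx with ⟨hx, _⟩ | ⟨y, ⟨hy, hy2⟩, hye⟩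
  · exact h2 hx
  · have := h1 hy; simp only [mem_range] at *; omega


/-! ### Counting sets -/

def condP (k : ℕ) (z : Finset ℕ × Finset ℕ) : Prop :=
  ∀ t ∈ range k, Fle z.2 t ≤ Rlt z.1 t

instance (k : ℕ) : DecidablePred (condP k) :=
  fun z => inferInstanceAs (Decidable (∀ t ∈ range k, Fle z.2 t ≤ Rlt z.1 t))

def violP (z : Finset ℕ × Finset ℕ) (t : ℕ) : Prop := Rlt z.1 t < Fle z.2 t

instance (z : Finset ℕ × Finset ℕ) : DecidablePred (violP z) := fun t => Nat.decLt _ _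

def okP (w : Finset ℕ × Finset ℕ) (t : ℕ) : Prop := Fle w.2 t ≤ Rlt w.1 t + 1

instance (w : Finset ℕ × Finset ℕ) : DecidablePred (okP w) := fun t => Nat.decLe _ _

def Aset (k a : ℕ) : Finset (Finset ℕ × Finset ℕ) :=
  ((range k).powersetCard a ×ˢ (range k).powersetCard a).filter (condP k)

def Bset (k a : ℕ) : Finset (Finset ℕ × Finset ℕ) :=
  ((range (k-1)).powersetCard a) ×ˢ ((range k).powersetCard a)

def Tset (k a : ℕ) : Finset (Finset ℕ × Finset ℕ) :=
  ((range (k-1)).powersetCard (a-1)) ×ˢ ((range k).powersetCard (a+1))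

def jv (k : ℕ) (z : Finset ℕ × Finset ℕ) : ℕ := Nat.findGreatest (violP z) (k-1)

def jw (k : ℕ) (w : Finset ℕ × Finset ℕ) : ℕ := Nat.findGreatest (okP w) (k-1)

lemma mem_Bset {k a : ℕ} {z : Finset ℕ × Finset ℕ} :
    z ∈ Bset k a ↔ (z.1 ⊆ range (k-1) ∧ z.1.card = a) ∧ (z.2 ⊆ range k ∧ z.2.card = a) := by
  unfold Bset; rw [mem_product, mem_powersetCard, mem_powersetCard]

lemma mem_Tset {k a : ℕ} {z : Finset ℕ × Finset ℕ} :
    z ∈ Tset k a ↔ (z.1 ⊆ range (k-1) ∧ z.1.card = a-1) ∧ (z.2 ⊆ range k ∧ z.2.card = a+1) := by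
  unfold Tset; rw [mem_product, mem_powersetCard, mem_powersetCard]

lemma Fle_succ_le (S : Finset ℕ) (t : ℕ) : Fle S (t+1) ≤ Fle S t + 1 := by
  rw [Fle_succ]; split <;> omega

lemma Rlt_succ_le (S : Finset ℕ) (t : ℕ) : Rlt S (t+1) ≤ Rlt S t + 1 := by
  rw [Rlt_succ]; split <;> omega

lemma bad_step {k a : ℕ} (hk : 1 ≤ k) (ha : 1 ≤ a) {z : Finset ℕ × Finset ℕ}
    (hz : z ∈ Bset k a) (hnc : ¬ condP k z) :
    reflMap (jv k z) z ∈ Tset k a ∧ jw k (reflMap (jv k z) z) = jv k z := by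
  obtain ⟨⟨hz1, hz1c⟩, hz2, hz2c⟩ := mem_Bset.mp hz
  unfold jv jw
  set j := Nat.findGreatest (violP z) (k-1) with hj
  have hex : ∃ t, t ≤ k-1 ∧ violP z t := by
    unfold condP at hnc
    push_neg at hnc
    obtain ⟨t, ht, ht2⟩ := hnc
    exact ⟨t, by simp only [mem_range] at ht; omega, ht2⟩
  obtain ⟨t, ht, hvt⟩ := hex
  have hjv : violP z j := Nat.findGreatest_spec (n := k-1) ht hvt
  have hjle : j ≤ k-1 := Nat.findGreatest_le (k-1)
  have hvk : ¬ violP z (k-1) := by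
    unfold violP
    have h1 : Fle z.2 (k-1) = z.2.card :=
      Fle_eq_card _ _ (fun y hy => by have := hz2 hy; simp only [mem_range] at this; omega)
    have h2 : Rlt z.1 (k-1) = z.1.card :=
      Rlt_eq_card _ _ (fun y hy => by have := hz1 hy; simp only [mem_range] at this; omega)
    omega
  have hjlt : j < k-1 := by
    rcases Nat.lt_or_ge j (k-1) with h | h
    · exact h
    · exact absurd (le_antisymm hjle h ▸ hjv) hvk
  have hnv1 : ¬ violP z (j+1) :=
    Nat.findGreatest_is_greatest (n := k-1) (by omega) (by omega)
  have htight : Fle z.2 j = Rlt z.1 j + 1 := by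
    unfold violP at hjv hnv1
    have h1 := Fle_succ_le z.2 j
    have h2 := Rlt_succ_le z.1 j
    have h3 := Fle_mono z.2 (show j ≤ j+1 by omega)
    omega
  have hc1 := card_reflMap_fst z j
  have hc2 := card_reflMap_snd z j
  have hfle := Fle_le_card z.2 j
  have hrle := Rlt_le_card z.1 j
  have hsub1 : (reflMap j z).1 ⊆ range (k-1) := by
    apply reflMap_sub_fst z j (k-1) 0 hz1
    rw [show k-1+1 = k by omega]; exact hz2
  have hsub2 : (reflMap j z).2 ⊆ range k := by
    have := reflMap_sub_snd z j (k-1) 0 hz1 (by rw [show k-1+1 = k by omega]; exact hz2)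
    rwa [show k-1+1 = k by omega] at this
  have hmem : reflMap j z ∈ Tset k a := by
    rw [mem_Tset]
    exact ⟨⟨hsub1, by omega⟩, hsub2, by omega⟩
  refine ⟨hmem, ?_⟩
  have heqF : Fle (reflMap j z).2 j = Fle z.2 j := by
    have := Fle_reflMap_snd z (le_refl j); omega
  have heqR : Rlt (reflMap j z).1 j = Rlt z.1 j := by
    have := Rlt_reflMap_fst z (le_refl j); omega
  have hokj : okP (reflMap j z) j := by unfold okP; omega
  have hge : j ≤ Nat.findGreatest (okP (reflMap j z)) (k-1) :=
    Nat.le_findGreatest (by omega) hokj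
  have hnot : ∀ t', j < t' → t' ≤ k-1 → ¬ okP (reflMap j z) t' := by
    intro t' h1 h2
    have hR := Rlt_reflMap_fst z (show j ≤ t' by omega)
    have hF := Fle_reflMap_snd z (show j ≤ t' by omega)
    have hnv : ¬ violP z t' := Nat.findGreatest_is_greatest (n := k-1) (by omega) h2
    unfold violP at hnv
    have hm1 := Fle_mono z.2 (show j ≤ t' by omega)
    have hm2 := Rlt_mono z.1 (show j ≤ t' by omega)
    unfold okP
    omega
  have hle : Nat.findGreatest (okP (reflMap j z)) (k-1) ≤ j := by
    by_contra h
    push_neg at h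
    have h1 : Nat.findGreatest (okP (reflMap j z)) (k-1) ≤ k-1 := Nat.findGreatest_le (k-1)
    have h2 : okP (reflMap j z) (Nat.findGreatest (okP (reflMap j z)) (k-1)) :=
      Nat.findGreatest_spec (n := k-1) (m := j) (by omega) hokj
    exact hnot _ h h1 h2
  omega

lemma t_step {k a : ℕ} (hk : 1 ≤ k) (ha : 1 ≤ a) {w : Finset ℕ × Finset ℕ}
    (hw : w ∈ Tset k a) :
    reflMap (jw k w) w ∈ Bset k a ∧ ¬ condP k (reflMap (jw k w) w)
      ∧ jv k (reflMap (jw k w) w) = jw k w := by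
  obtain ⟨⟨hw1, hw1c⟩, hw2, hw2c⟩ := mem_Tset.mp hw
  unfold jv jw
  set j := Nat.findGreatest (okP w) (k-1) with hj
  have hok0 : okP w 0 := by
    unfold okP
    have := Fle_zero_le_one w.2
    omega
  have hnok : ¬ okP w (k-1) := by
    unfold okP
    have h1 : Fle w.2 (k-1) = w.2.card :=
      Fle_eq_card _ _ (fun y hy => by have := hw2 hy; simp only [mem_range] at this; omega)
    have h2 : Rlt w.1 (k-1) = w.1.card :=
      Rlt_eq_card _ _ (fun y hy => by have := hw1 hy; simp only [mem_range] at this; omega)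
    omega
  have hok : okP w j := Nat.findGreatest_spec (n := k-1) (Nat.zero_le _) hok0
  have hjle : j ≤ k-1 := Nat.findGreatest_le (k-1)
  have hjlt : j < k-1 := by
    rcases Nat.lt_or_ge j (k-1) with h | h
    · exact h
    · exact absurd (le_antisymm hjle h ▸ hok) hnok
  have hnok1 : ¬ okP w (j+1) :=
    Nat.findGreatest_is_greatest (n := k-1) (by omega) (by omega)
  have htight : Fle w.2 j = Rlt w.1 j + 1 := by
    unfold okP at hok hnok1
    have h1 := Fle_succ_le w.2 j
    have h2 := Rlt_succ_le w.1 j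
    have h3 := Rlt_mono w.1 (show j ≤ j+1 by omega)
    omega
  have hc1 := card_reflMap_fst w j
  have hc2 := card_reflMap_snd w j
  have hfle := Fle_le_card w.2 j
  have hrle := Rlt_le_card w.1 j
  have hrle2 : Rlt w.1 j ≤ a - 1 := hw1c ▸ hrle
  have hsub1 : (reflMap j w).1 ⊆ range (k-1) := by
    apply reflMap_sub_fst w j (k-1) 0 hw1
    rw [show k-1+1 = k by omega]; exact hw2
  have hsub2 : (reflMap j w).2 ⊆ range k := by
    have := reflMap_sub_snd w j (k-1) 0 hw1 (by rw [show k-1+1 = k by omega]; exact hw2)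
    rwa [show k-1+1 = k by omega] at this
  have hmem : reflMap j w ∈ Bset k a := by
    rw [mem_Bset]
    exact ⟨⟨hsub1, by omega⟩, hsub2, by omega⟩
  have heqF : Fle (reflMap j w).2 j = Fle w.2 j := by
    have := Fle_reflMap_snd w (le_refl j); omega
  have heqR : Rlt (reflMap j w).1 j = Rlt w.1 j := by
    have := Rlt_reflMap_fst w (le_refl j); omega
  have hviolj : violP (reflMap j w) j := by unfold violP; omega
  have hnc : ¬ condP k (reflMap j w) := by
    intro hc
    have := hc j (by simp only [mem_range]; omega)
    unfold violP at hviolj; omega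
  refine ⟨hmem, hnc, ?_⟩
  have hge : j ≤ Nat.findGreatest (violP (reflMap j w)) (k-1) :=
    Nat.le_findGreatest (by omega) hviolj
  have hnot : ∀ t', j < t' → t' ≤ k-1 → ¬ violP (reflMap j w) t' := by
    intro t' h1 h2
    have hR := Rlt_reflMap_fst w (show j ≤ t' by omega)
    have hF := Fle_reflMap_snd w (show j ≤ t' by omega)
    have hnok' : ¬ okP w t' := Nat.findGreatest_is_greatest (n := k-1) (by omega) h2
    unfold okP at hnok'
    have hm1 := Fle_mono w.2 (show j ≤ t' by omega)
    have hm2 := Rlt_mono w.1 (show j ≤ t' by omega)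
    unfold violP
    omega
  have hle : Nat.findGreatest (violP (reflMap j w)) (k-1) ≤ j := by
    by_contra h
    push_neg at h
    have h1 : Nat.findGreatest (violP (reflMap j w)) (k-1) ≤ k-1 := Nat.findGreatest_le (k-1)
    have h2 : violP (reflMap j w) (Nat.findGreatest (violP (reflMap j w)) (k-1)) :=
      Nat.findGreatest_spec (n := k-1) (m := j) (by omega) hviolj
    exact hnot _ h h1 h2
  omega

lemma bad_card {k a : ℕ} (hk : 1 ≤ k) (ha : 1 ≤ a) :
    ((Bset k a).filter (fun z => ¬ condP k z)).card = (Tset k a).card := by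
  apply Finset.card_bij' (fun z _ => reflMap (jv k z) z) (fun w _ => reflMap (jw k w) w)
  · intro z hz
    simp only [mem_filter] at hz
    exact (bad_step hk ha hz.1 hz.2).1
  · intro w hw
    have := t_step hk ha hw
    simp only [mem_filter]
    exact ⟨this.1, this.2.1⟩
  · intro z hz
    simp only [mem_filter] at hz
    rw [(bad_step hk ha hz.1 hz.2).2, reflMap_invol]
  · intro w hw
    rw [(t_step hk ha hw).2.2, reflMap_invol]


lemma Aset_eq_filter {k a : ℕ} (hk : 1 ≤ k) : Aset k a = (Bset k a).filter (condP k) := by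
  unfold Aset Bset
  ext z
  simp only [mem_filter, mem_product, mem_powersetCard]
  constructor
  · rintro ⟨⟨⟨h1s, h1c⟩, ⟨h2s, h2c⟩⟩, hc⟩
    refine ⟨⟨⟨?_, h1c⟩, ⟨h2s, h2c⟩⟩, hc⟩
    intro x hx
    have hcc := hc (k-1) (by simp only [mem_range]; omega)
    have hFle : Fle z.2 (k-1) = z.2.card :=
      Fle_eq_card _ _ (fun y hy => by have := h2s hy; simp only [mem_range] at this; omega)
    have hRlt : Rlt z.1 (k-1) = z.1.card :=
      le_antisymm (Rlt_le_card _ _) (by omega)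
    have hfeq : z.1.filter (fun y => y < k-1) = z.1 :=
      Finset.eq_of_subset_of_card_le (filter_subset _ _) (by unfold Rlt at hRlt; omega)
    rw [← hfeq] at hx
    simp only [mem_filter] at hx
    simp only [mem_range]
    omega
  · rintro ⟨⟨⟨h1s, h1c⟩, hrest⟩, hc⟩
    refine ⟨⟨⟨?_, h1c⟩, hrest⟩, hc⟩
    intro x hx
    have := h1s hx
    simp only [mem_range] at *
    omega

lemma Aset_card {k a : ℕ} (hk : 1 ≤ k) (ha : 1 ≤ a) :
    (Aset k a).card + (k-1).choose (a-1) * k.choose (a+1) = (k-1).choose a * k.choose a := by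
  have hpart := Finset.card_filter_add_card_filter_not (s := Bset k a) (p := condP k)
  have hB : (Bset k a).card = (k-1).choose a * k.choose a := by
    unfold Bset
    rw [card_product, card_powersetCard, card_powersetCard, card_range, card_range]
  have hT : (Tset k a).card = (k-1).choose (a-1) * k.choose (a+1) := by
    unfold Tset
    rw [card_product, card_powersetCard, card_powersetCard, card_range, card_range]
  have hbad := bad_card hk ha
  rw [Aset_eq_filter hk]
  omega

lemma arith (k a : ℕ) (ha : 1 ≤ a) :
    k.choose a * ((k-1).choose a) / (a+1)
      = (k-1).choose a * k.choose a - (k-1).choose (a-1) * k.choose (a+1) := by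
  obtain ⟨a', rfl⟩ : ∃ a', a = a' + 1 := ⟨a - 1, by omega⟩
  set X := k.choose (a'+1) * ((k-1).choose (a'+1)) with hX
  set Y := k.choose (a'+2) * (k-1).choose a' with hY
  have h1 : k.choose (a'+2) * (a'+2) = k.choose (a'+1) * (k - (a'+1)) :=
    Nat.choose_succ_right_eq k (a'+1)
  have h2 : (k-1).choose (a'+1) * (a'+1) = (k-1).choose a' * (k-1-a') :=
    Nat.choose_succ_right_eq (k-1) a'
  have key : (a'+2) * Y = (a'+1) * X := by
    rcases Nat.eq_zero_or_pos k with hk | hk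
    · subst hk
      simp [hX, hY, Nat.choose_eq_zero_of_lt (by omega : 0 < a'+1),
        Nat.choose_eq_zero_of_lt (by omega : 0 < a'+2)]
    · have hka : k - (a'+1) = k-1-a' := by omega
      rw [hX, hY]
      calc (a'+2) * (k.choose (a'+2) * (k-1).choose a')
          = (k.choose (a'+2) * (a'+2)) * (k-1).choose a' := by ring
        _ = k.choose (a'+1) * (k - (a'+1)) * (k-1).choose a' := by rw [h1]
        _ = k.choose (a'+1) * ((k-1).choose a' * (k-1-a')) := by rw [hka]; ring
        _ = k.choose (a'+1) * ((k-1).choose (a'+1) * (a'+1)) := by rw [h2]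
        _ = (a'+1) * (k.choose (a'+1) * ((k-1).choose (a'+1))) := by ring
  have hYX : Y ≤ X := by
    by_contra h
    push_neg at h
    nlinarith
  have hfin : X = (a'+2) * (X - Y) := by
    have e1 : (a'+2)*(X-Y) + (a'+2)*Y = (a'+2)*X := by rw [← Nat.mul_add]; congr 1; omega
    have e2 : (a'+2)*X = (a'+1)*X + X := by ring
    omega
  have hre : (k-1).choose (a'+1) * k.choose (a'+1) = X := by rw [hX]; ring
  have hre2 : (k-1).choose (a'+1-1) * k.choose (a'+1+1) = Y := by
    rw [hY]; simp only [Nat.add_sub_cancel]; ring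
  rw [hre, hre2]
  conv_lhs => rw [hfin]
  rw [show a'+1+1 = a'+2 from rfl, Nat.mul_div_cancel_left _ (by omega : 0 < a'+2)]

lemma Aset_card_final (k a : ℕ) :
    (Aset k a).card = k.choose a * (k - 1).choose a / (a + 1) := by
  rcases Nat.eq_zero_or_pos a with ha | ha
  · subst ha
    have h : Aset k 0 = {(∅, ∅)} := by
      apply Finset.Subset.antisymm
      · intro z hz
        unfold Aset at hz
        simp only [mem_filter, mem_product, mem_powersetCard] at hz
        obtain ⟨⟨⟨_, h1⟩, _, h2⟩, _⟩ := hz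
        rw [mem_singleton, Prod.ext_iff]
        exact ⟨card_eq_zero.mp h1, card_eq_zero.mp h2⟩
      · intro z hz
        rw [mem_singleton] at hz
        subst hz
        unfold Aset
        simp only [mem_filter, mem_product, mem_powersetCard]
        refine ⟨⟨⟨empty_subset _, card_empty⟩, empty_subset _, card_empty⟩, ?_⟩
        intro t _
        unfold Fle Rlt
        simp
    rw [h, card_singleton]
    simp
  · rcases Nat.eq_zero_or_pos k with hk | hk
    · subst hk
      have h : Aset 0 a = ∅ := by
        apply Finset.eq_empty_of_forall_notMem
        intro z hz
        unfold Aset at hz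
        rw [mem_filter, mem_product, mem_powersetCard] at hz
        obtain ⟨⟨⟨h1, h2⟩, _⟩, _⟩ := hz
        rw [Finset.range_zero, Finset.subset_empty] at h1
        rw [h1] at h2
        simp at h2
        omega
      rw [h]
      simp [Nat.choose_eq_zero_of_lt ha]
    · rw [arith k a (by omega)]
      have := Aset_card hk ha
      omega


/-! ### From paths to subset pairs -/

def qv (k : ℕ) (p : Fin (2*k) → Fin 3) (n : ℕ) : ℤ :=
  if h : n < 2*k then (p ⟨n, h⟩ : ℤ) - 1 else 0

def Rof (k : ℕ) (p : Fin (2*k) → Fin 3) : Finset ℕ :=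
  (range k).filter (fun j => qv k p (2*j+1) = 1)

def Fof (k : ℕ) (p : Fin (2*k) → Fin 3) : Finset ℕ :=
  (range k).filter (fun j => qv k p (2*j) = -1)

def SS (k : ℕ) (p : Fin (2*k) → Fin 3) (m : ℕ) : ℤ := ∑ n ∈ range m, qv k p n

lemma mem_Rof {k : ℕ} {p : Fin (2*k) → Fin 3} {j : ℕ} :
    j ∈ Rof k p ↔ j < k ∧ qv k p (2*j+1) = 1 := by
  unfold Rof; rw [mem_filter, mem_range]

lemma mem_Fof {k : ℕ} {p : Fin (2*k) → Fin 3} {j : ℕ} :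
    j ∈ Fof k p ↔ j < k ∧ qv k p (2*j) = -1 := by
  unfold Fof; rw [mem_filter, mem_range]

lemma qv_eq {k : ℕ} (p : Fin (2*k) → Fin 3) (i : Fin (2*k)) :
    qv k p i.1 = (p i : ℤ) - 1 := by
  unfold qv
  rw [dif_pos i.2]

lemma qv_range {k : ℕ} (p : Fin (2*k) → Fin 3) (n : ℕ) :
    qv k p n = -1 ∨ qv k p n = 0 ∨ qv k p n = 1 := by
  unfold qv
  split
  · rename_i h
    have := (p ⟨n, h⟩).isLt
    omega
  · omega

lemma qv_even_cases {k : ℕ} {p : Fin (2*k) → Fin 3}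
    (hp1 : ∀ i, ((p i : ℤ) - 1 = 1 → Odd i.1) ∧ ((p i : ℤ) - 1 = -1 → Even i.1))
    {t : ℕ} (ht : t < k) :
    (t ∈ Fof k p ∧ qv k p (2*t) = -1) ∨ (t ∉ Fof k p ∧ qv k p (2*t) = 0) := by
  by_cases hm : t ∈ Fof k p
  · exact Or.inl ⟨hm, (mem_Fof.mp hm).2⟩
  · refine Or.inr ⟨hm, ?_⟩
    have hlt : 2*t < 2*k := by omega
    have he : qv k p (2*t) = (p ⟨2*t, hlt⟩ : ℤ) - 1 := qv_eq p ⟨2*t, hlt⟩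
    have hno : qv k p (2*t) ≠ 1 := by
      intro h1
      have := (hp1 ⟨2*t, hlt⟩).1 (he ▸ h1)
      obtain ⟨c, hc⟩ := this
      have hc' : 2*t = 2*c+1 := hc
      omega
    have hno2 : qv k p (2*t) ≠ -1 := fun h2 => hm (mem_Fof.mpr ⟨ht, h2⟩)
    rcases qv_range p (2*t) with h | h | h <;> omega

lemma qv_odd_cases {k : ℕ} {p : Fin (2*k) → Fin 3}
    (hp1 : ∀ i, ((p i : ℤ) - 1 = 1 → Odd i.1) ∧ ((p i : ℤ) - 1 = -1 → Even i.1))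
    {t : ℕ} (ht : t < k) :
    (t ∈ Rof k p ∧ qv k p (2*t+1) = 1) ∨ (t ∉ Rof k p ∧ qv k p (2*t+1) = 0) := by
  by_cases hm : t ∈ Rof k p
  · exact Or.inl ⟨hm, (mem_Rof.mp hm).2⟩
  · refine Or.inr ⟨hm, ?_⟩
    have hlt : 2*t+1 < 2*k := by omega
    have he : qv k p (2*t+1) = (p ⟨2*t+1, hlt⟩ : ℤ) - 1 := qv_eq p ⟨2*t+1, hlt⟩
    have hno : qv k p (2*t+1) ≠ -1 := by
      intro h1
      have := (hp1 ⟨2*t+1, hlt⟩).2 (he ▸ h1)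
      obtain ⟨c, hc⟩ := this
      have hc' : 2*t+1 = c + c := hc
      omega
    have hno2 : qv k p (2*t+1) ≠ 1 := fun h2 => hm (mem_Rof.mpr ⟨ht, h2⟩)
    rcases qv_range p (2*t+1) with h | h | h <;> omega

lemma SS_formula {k : ℕ} {p : Fin (2*k) → Fin 3}
    (hp1 : ∀ i, ((p i : ℤ) - 1 = 1 → Odd i.1) ∧ ((p i : ℤ) - 1 = -1 → Even i.1)) :
    ∀ t, (t ≤ k → SS k p (2*t) = (Rlt (Rof k p) t : ℤ) - (Rlt (Fof k p) t))
       ∧ (t < k → SS k p (2*t+1) = (Rlt (Rof k p) t : ℤ) - (Fle (Fof k p) t)) := by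
  intro t
  induction t with
  | zero =>
    constructor
    · intro _
      simp [SS, Rlt_zero]
    · intro h0
      have h1 : SS k p (2*0+1) = qv k p 0 := by
        show SS k p 1 = _
        unfold SS
        rw [Finset.sum_range_one]
      have h2 : (Fle (Fof k p) 0 : ℤ) = (Rlt (Fof k p) 0 : ℤ) + (if 0 ∈ Fof k p then 1 else 0) := by
        rw [Fle_eq_Rlt_add]
        push_cast
        split <;> simp
      rcases qv_even_cases hp1 h0 with ⟨hm, hq⟩ | ⟨hm, hq⟩
      · rw [h1, show (2:ℕ)*0 = 0 from rfl] at *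
        rw [hq, h2, if_pos hm]
        simp [Rlt_zero]
      · rw [h1, show (2:ℕ)*0 = 0 from rfl] at *
        rw [hq, h2, if_neg hm]
        simp [Rlt_zero]
  | succ t ih =>
    have heven : t + 1 ≤ k → SS k p (2*(t+1)) = (Rlt (Rof k p) (t+1) : ℤ) - (Rlt (Fof k p) (t+1)) := by
      intro h
      have hodd := ih.2 (by omega)
      have hstep : SS k p (2*(t+1)) = SS k p (2*t+1) + qv k p (2*t+1) := by
        unfold SS
        rw [show 2*(t+1) = (2*t+1)+1 by omega, Finset.sum_range_succ]
      have hR : (Rlt (Rof k p) (t+1) : ℤ) = (Rlt (Rof k p) t : ℤ) + (if t ∈ Rof k p then 1 else 0) := by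
        rw [Rlt_succ]; push_cast; split <;> simp
      have hF : Rlt (Fof k p) (t+1) = Fle (Fof k p) t := (Fle_eq_Rlt_succ _ _).symm
      rcases qv_odd_cases hp1 (show t < k by omega) with ⟨hm, hq⟩ | ⟨hm, hq⟩
      · rw [hstep, hodd, hq, hR, if_pos hm, hF]; ring
      · rw [hstep, hodd, hq, hR, if_neg hm, hF]; ring
    constructor
    · exact heven
    · intro h
      have he := heven (by omega)
      have hstep : SS k p (2*(t+1)+1) = SS k p (2*(t+1)) + qv k p (2*(t+1)) := by
        unfold SS
        rw [Finset.sum_range_succ]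
      have hF : (Fle (Fof k p) (t+1) : ℤ) = (Rlt (Fof k p) (t+1) : ℤ) + (if t+1 ∈ Fof k p then 1 else 0) := by
        rw [Fle_eq_Rlt_add]; push_cast; split <;> simp
      rcases qv_even_cases hp1 (show t+1 < k by omega) with ⟨hm, hq⟩ | ⟨hm, hq⟩
      · rw [hstep, he, hq, hF, if_pos hm]; ring
      · rw [hstep, he, hq, hF, if_neg hm]; ring


lemma prefix_eq {k : ℕ} (p : Fin (2*k) → Fin 3) (j : Fin (2*k)) :
    ∑ i ∈ Finset.univ.filter (fun i => i ≤ j), ((p i : ℤ) - 1) = SS k p (j.1+1) := by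
  unfold SS
  refine Finset.sum_bij' (fun (i : Fin (2*k)) (_ : i ∈ Finset.univ.filter (fun i => i ≤ j)) => i.1)
    (fun (n : ℕ) (hn : n ∈ range (j.1+1)) => (⟨n, by simp only [mem_range] at hn; omega⟩ : Fin (2*k)))
    ?_ ?_ ?_ ?_ ?_
  · intro i hi
    simp only [mem_filter, mem_univ, true_and] at hi
    simp only [mem_range]
    exact Nat.lt_succ_of_le hi
  · intro n hn
    simp only [mem_range] at hn
    simp only [mem_filter, mem_univ, true_and]
    rw [Fin.le_def]
    exact Nat.lt_succ_iff.mp hn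
  · intro i _
    rfl
  · intro n _
    rfl
  · intro i _
    rw [qv_eq]

lemma total_eq {k : ℕ} (p : Fin (2*k) → Fin 3) :
    ∑ i, ((p i : ℤ) - 1) = SS k p (2*k) := by
  unfold SS
  rw [← Fin.sum_univ_eq_sum_range (fun n => qv k p n) (2*k)]
  apply Finset.sum_congr rfl
  intro i _
  rw [qv_eq]

lemma Rof_card_eq {k : ℕ} {p : Fin (2*k) → Fin 3}
    (hp1 : ∀ i, ((p i : ℤ) - 1 = 1 → Odd i.1) ∧ ((p i : ℤ) - 1 = -1 → Even i.1)) :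
    (Finset.univ.filter (fun i : Fin (2*k) => (p i : ℤ) - 1 = 1)).card = (Rof k p).card := by
  refine Finset.card_bij'
    (fun (i : Fin (2*k)) (_ : i ∈ Finset.univ.filter (fun i : Fin (2*k) => (p i : ℤ) - 1 = 1)) => i.1 / 2)
    (fun (j : ℕ) (hj : j ∈ Rof k p) => (⟨2*j+1, by rw [mem_Rof] at hj; omega⟩ : Fin (2*k)))
    ?_ ?_ ?_ ?_
  · intro i hi
    simp only [mem_filter, mem_univ, true_and] at hi
    obtain ⟨c, hc⟩ := (hp1 i).1 hi
    rw [mem_Rof]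
    have h2 : 2 * (i.1/2) + 1 = i.1 := by omega
    constructor
    · show i.1/2 < k
      have := i.2; omega
    · show qv k p (2*(i.1/2)+1) = 1
      rw [h2, qv_eq]; exact hi
  · intro j hj
    rw [mem_Rof] at hj
    simp only [mem_filter, mem_univ, true_and]
    have := qv_eq p (⟨2*j+1, by omega⟩ : Fin (2*k))
    rw [show ((⟨2*j+1, by omega⟩ : Fin (2*k)) : ℕ) = 2*j+1 from rfl] at this
    rw [← this]
    exact hj.2
  · intro i hi
    simp only [mem_filter, mem_univ, true_and] at hi
    obtain ⟨c, hc⟩ := (hp1 i).1 hi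
    apply Fin.ext
    show 2 * (i.1/2) + 1 = i.1
    omega
  · intro j hj
    show (2*j+1) / 2 = j
    omega

/-! ### From subset pairs to paths -/

def pathOf (k : ℕ) (z : Finset ℕ × Finset ℕ) : Fin (2*k) → Fin 3 :=
  fun i => if Odd i.1 then (if i.1/2 ∈ z.1 then 2 else 1) else (if i.1/2 ∈ z.2 then 0 else 1)

lemma pathOf_odd {k : ℕ} (z : Finset ℕ × Finset ℕ) (i : Fin (2*k)) (h : Odd i.1) :
    pathOf k z i = if i.1/2 ∈ z.1 then 2 else 1 := by
  unfold pathOf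
  rw [if_pos h]

lemma pathOf_even {k : ℕ} (z : Finset ℕ × Finset ℕ) (i : Fin (2*k)) (h : ¬ Odd i.1) :
    pathOf k z i = if i.1/2 ∈ z.2 then 0 else 1 := by
  unfold pathOf
  rw [if_neg h]

lemma Rof_pathOf {k : ℕ} (z : Finset ℕ × Finset ℕ) (hz1 : z.1 ⊆ range k) :
    Rof k (pathOf k z) = z.1 := by
  ext j
  rw [mem_Rof]
  constructor
  · rintro ⟨hjk, hq⟩
    have hlt : 2*j+1 < 2*k := by omega
    rw [show 2*j+1 = (⟨2*j+1, hlt⟩ : Fin (2*k)).1 from rfl, qv_eq] at hq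
    rw [pathOf_odd z _ ⟨j, rfl⟩] at hq
    by_cases hm : j ∈ z.1
    · exact (show (2*j+1)/2 = j by omega) ▸ hm
    · exfalso
      rw [show (⟨2*j+1, hlt⟩ : Fin (2*k)).1 / 2 = j by show (2*j+1)/2 = j; omega, if_neg hm] at hq
      norm_num at hq
  · intro hm
    have hjk : j < k := by have := hz1 hm; simpa [mem_range] using this
    have hlt : 2*j+1 < 2*k := by omega
    refine ⟨hjk, ?_⟩
    rw [show 2*j+1 = (⟨2*j+1, hlt⟩ : Fin (2*k)).1 from rfl, qv_eq]
    rw [pathOf_odd z _ ⟨j, rfl⟩]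
    rw [show (⟨2*j+1, hlt⟩ : Fin (2*k)).1 / 2 = j by show (2*j+1)/2 = j; omega, if_pos hm]
    norm_num

lemma Fof_pathOf {k : ℕ} (z : Finset ℕ × Finset ℕ) (hz2 : z.2 ⊆ range k) :
    Fof k (pathOf k z) = z.2 := by
  ext j
  rw [mem_Fof]
  constructor
  · rintro ⟨hjk, hq⟩
    have hlt : 2*j < 2*k := by omega
    rw [show 2*j = (⟨2*j, hlt⟩ : Fin (2*k)).1 from rfl, qv_eq] at hq
    rw [pathOf_even z _ (by rintro ⟨c, hc⟩; have hc' : 2*j = 2*c+1 := hc; omega)] at hq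
    by_cases hm : j ∈ z.2
    · exact (show (2*j)/2 = j by omega) ▸ hm
    · exfalso
      rw [show (⟨2*j, hlt⟩ : Fin (2*k)).1 / 2 = j by show (2*j)/2 = j; omega, if_neg hm] at hq
      norm_num at hq
  · intro hm
    have hjk : j < k := by have := hz2 hm; simpa [mem_range] using this
    have hlt : 2*j < 2*k := by omega
    refine ⟨hjk, ?_⟩
    rw [show 2*j = (⟨2*j, hlt⟩ : Fin (2*k)).1 from rfl, qv_eq]
    rw [pathOf_even z _ (by rintro ⟨c, hc⟩; have hc' : 2*j = 2*c+1 := hc; omega)]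
    rw [show (⟨2*j, hlt⟩ : Fin (2*k)).1 / 2 = j by show (2*j)/2 = j; omega, if_pos hm]
    norm_num

lemma pathOf_parity {k : ℕ} (z : Finset ℕ × Finset ℕ) :
    ∀ i : Fin (2*k), ((pathOf k z i : ℤ) - 1 = 1 → Odd i.1)
      ∧ ((pathOf k z i : ℤ) - 1 = -1 → Even i.1) := by
  intro i
  by_cases h : Odd i.1
  · rw [pathOf_odd z i h]
    constructor
    · intro _; exact h
    · intro hv
      exfalso
      by_cases hm : i.1/2 ∈ z.1 <;> simp [hm] at hv
  · rw [pathOf_even z i h]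
    constructor
    · intro hv
      exfalso
      by_cases hm : i.1/2 ∈ z.2 <;> simp [hm] at hv
    · intro _; exact Nat.not_odd_iff_even.mp h
  
lemma pathOf_inv {k : ℕ} {p : Fin (2*k) → Fin 3}
    (hp1 : ∀ i, ((p i : ℤ) - 1 = 1 → Odd i.1) ∧ ((p i : ℤ) - 1 = -1 → Even i.1)) :
    pathOf k (Rof k p, Fof k p) = p := by
  funext i
  have hval := (p i).isLt
  have hi2 := i.2
  by_cases h : Odd i.1
  · rw [pathOf_odd _ i h]
    obtain ⟨c, hc⟩ := h
    have hck : c < k := by omega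
    have hlt1 : 2*c+1 < 2*k := by omega
    have heq : (⟨2*c+1, hlt1⟩ : Fin (2*k)) = i := by
      apply Fin.ext; show 2*c+1 = i.1; omega
    have hq : qv k p (2*c+1) = (p i : ℤ) - 1 := by
      unfold qv
      rw [dif_pos hlt1, heq]
    have hdiv : i.1/2 = c := by omega
    rw [hdiv]
    show (if c ∈ (Rof k p, Fof k p).1 then (2:Fin 3) else 1) = p i
    by_cases hm : c ∈ Rof k p
    · rw [if_pos hm]
      have hv := (mem_Rof.mp hm).2
      rw [hq] at hv
      apply Fin.ext
      show 2 = (p i).1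
      omega
    · rw [if_neg hm]
      have hne : qv k p (2*c+1) ≠ 1 := fun hx => hm (mem_Rof.mpr ⟨hck, hx⟩)
      rw [hq] at hne
      have hne2 : (p i : ℤ) - 1 ≠ -1 := by
        intro hx
        obtain ⟨d, hd⟩ := (hp1 i).2 hx
        omega
      apply Fin.ext
      show 1 = (p i).1
      omega
  · rw [pathOf_even _ i h]
    have heven : Even i.1 := Nat.not_odd_iff_even.mp h
    obtain ⟨c, hc⟩ := heven
    have hck : c < k := by omega
    have hlt1 : 2*c < 2*k := by omega
    have heq : (⟨2*c, hlt1⟩ : Fin (2*k)) = i := by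
      apply Fin.ext; show 2*c = i.1; omega
    have hq : qv k p (2*c) = (p i : ℤ) - 1 := by
      unfold qv
      rw [dif_pos hlt1, heq]
    have hdiv : i.1/2 = c := by omega
    rw [hdiv]
    show (if c ∈ (Rof k p, Fof k p).2 then (0:Fin 3) else 1) = p i
    by_cases hm : c ∈ Fof k p
    · rw [if_pos hm]
      have hv := (mem_Fof.mp hm).2
      rw [hq] at hv
      apply Fin.ext
      show 0 = (p i).1
      omega
    · rw [if_neg hm]
      have hne : qv k p (2*c) ≠ -1 := fun hx => hm (mem_Fof.mpr ⟨hck, hx⟩)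
      rw [hq] at hne
      have hne2 : (p i : ℤ) - 1 ≠ 1 := by
        intro hx
        obtain ⟨d, hd⟩ := (hp1 i).1 hx
        omega
      apply Fin.ext
      show 1 = (p i).1
      omega


lemma toAset {k a : ℕ} {p : Fin (2*k) → Fin 3}
    (hp1 : ∀ i, ((p i : ℤ) - 1 = 1 → Odd i.1) ∧ ((p i : ℤ) - 1 = -1 → Even i.1))
    (hp2 : ∀ j : Fin (2*k), 0 ≤ ∑ i ∈ Finset.univ.filter (fun i => i ≤ j), ((p i : ℤ) - 1))
    (hp3 : (∑ i, ((p i : ℤ) - 1)) = 0)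
    (hc : (Finset.univ.filter (fun i => (p i : ℤ) - 1 = 1)).card = a) :
    (Rof k p, Fof k p) ∈ Aset k a := by
  have hRsub : Rof k p ⊆ range k := filter_subset _ _
  have hFsub : Fof k p ⊆ range k := filter_subset _ _
  have hRcard : (Rof k p).card = a := by rw [← Rof_card_eq hp1]; exact hc
  have htot : SS k p (2*k) = 0 := by rw [← total_eq]; exact hp3
  have hSk := (SS_formula hp1 k).1 (le_refl k)
  have hRk : Rlt (Rof k p) k = (Rof k p).card :=
    Rlt_eq_card _ _ (fun y hy => by have := hRsub hy; simpa [mem_range] using this)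
  have hFk : Rlt (Fof k p) k = (Fof k p).card :=
    Rlt_eq_card _ _ (fun y hy => by have := hFsub hy; simpa [mem_range] using this)
  have hFcard : (Fof k p).card = a := by
    rw [htot] at hSk
    have h' : (Rlt (Rof k p) k : ℤ) = Rlt (Fof k p) k := by omega
    have h'' : Rlt (Rof k p) k = Rlt (Fof k p) k := by exact_mod_cast h'
    omega
  unfold Aset
  rw [mem_filter, mem_product, mem_powersetCard, mem_powersetCard]
  refine ⟨⟨⟨hRsub, hRcard⟩, hFsub, hFcard⟩, ?_⟩
  intro t ht
  rw [mem_range] at ht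
  have hj : 2*t < 2*k := by omega
  have hnn := hp2 ⟨2*t, hj⟩
  rw [prefix_eq] at hnn
  have hform := (SS_formula hp1 t).2 ht
  rw [show (⟨2*t, hj⟩ : Fin (2*k)).1 + 1 = 2*t+1 from rfl, hform] at hnn
  show Fle (Fof k p) t ≤ Rlt (Rof k p) t
  have h' : (Fle (Fof k p) t : ℤ) ≤ Rlt (Rof k p) t := by omega
  exact_mod_cast h'

lemma ofAset {k a : ℕ} {z : Finset ℕ × Finset ℕ} (hz : z ∈ Aset k a) :
    IsAltMotzkin k (pathOf k z)
      ∧ (Finset.univ.filter (fun i => (pathOf k z i : ℤ) - 1 = 1)).card = a := by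
  unfold Aset at hz
  rw [mem_filter, mem_product, mem_powersetCard, mem_powersetCard] at hz
  obtain ⟨⟨⟨h1s, h1c⟩, h2s, h2c⟩, hcond⟩ := hz
  have hp1 := pathOf_parity (k := k) z
  have hR := Rof_pathOf z h1s
  have hF := Fof_pathOf z h2s
  have hform := SS_formula hp1
  replace hcond : ∀ t ∈ range k, Fle z.2 t ≤ Rlt z.1 t := hcond
  refine ⟨⟨hp1, ?_, ?_⟩, ?_⟩
  · intro j
    rw [prefix_eq]
    rcases Nat.even_or_odd j.1 with ⟨t, ht⟩ | ⟨t, ht⟩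
    · have hj2 := j.2
      have htk : t < k := by omega
      have hf := (hform t).2 htk
      rw [hR, hF] at hf
      rw [show j.1 + 1 = 2*t+1 by omega, hf]
      have hc := hcond t (by rw [mem_range]; omega)
      have h' : (Fle z.2 t : ℤ) ≤ Rlt z.1 t := by exact_mod_cast hc
      omega
    · have hj2 := j.2
      have htk : t + 1 ≤ k := by omega
      have hf := (hform (t+1)).1 htk
      rw [hR, hF] at hf
      rw [show j.1 + 1 = 2*(t+1) by omega, hf]
      have hc := hcond t (by rw [mem_range]; omega)
      have hle2 : Rlt z.2 (t+1) = Fle z.2 t := (Fle_eq_Rlt_succ _ _).symm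
      have hle3 : Rlt z.1 t ≤ Rlt z.1 (t+1) := Rlt_mono _ (by omega)
      have h' : Rlt z.2 (t+1) ≤ Rlt z.1 (t+1) := by omega
      have h'' : (Rlt z.2 (t+1) : ℤ) ≤ Rlt z.1 (t+1) := by exact_mod_cast h'
      omega
  · rw [total_eq]
    have hf := (hform k).1 (le_refl k)
    rw [hR, hF] at hf
    rw [hf]
    have e1 : Rlt z.1 k = z.1.card :=
      Rlt_eq_card _ _ (fun y hy => by have := h1s hy; simpa [mem_range] using this)
    have e2 : Rlt z.2 k = z.2.card :=
      Rlt_eq_card _ _ (fun y hy => by have := h2s hy; simpa [mem_range] using this)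
    rw [e1, e2, h1c, h2c]
    simp
  · rw [Rof_card_eq hp1, hR, h1c]

theorem main_count (k a : ℕ) :
    Nat.card {p : Fin (2 * k) → Fin 3 // IsAltMotzkin k p ∧
        (Finset.univ.filter (fun i => (p i : ℤ) - 1 = 1)).card = a}
      = (Aset k a).card := by
  have e : {p : Fin (2 * k) → Fin 3 // IsAltMotzkin k p ∧
        (Finset.univ.filter (fun i => (p i : ℤ) - 1 = 1)).card = a}
      ≃ {z : Finset ℕ × Finset ℕ // z ∈ Aset k a} :=
    { toFun := fun x => ⟨(Rof k x.1, Fof k x.1),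
        toAset x.2.1.1 x.2.1.2.1 x.2.1.2.2 x.2.2⟩
      invFun := fun y => ⟨pathOf k y.1, (ofAset y.2).1, (ofAset y.2).2⟩
      left_inv := fun x => Subtype.ext (pathOf_inv x.2.1.1)
      right_inv := fun y => Subtype.ext (by
        have hz := y.2
        unfold Aset at hz
        rw [mem_filter, mem_product, mem_powersetCard, mem_powersetCard] at hz
        exact Prod.ext (Rof_pathOf y.1 hz.1.1.1) (Fof_pathOf y.1 hz.1.2.1)) }
  rw [Nat.card_congr e, Nat.card_eq_finsetCard]

end AltM

/-- The number of alternating Motzkin paths of length `2k` with exactly `a`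
rises equals the Narayana number `N(k,a) = C(k,a) * C(k-1,a) / (a+1)`. -/
theorem stmt1 (k a : ℕ) :
    Nat.card {p : Fin (2 * k) → Fin 3 // IsAltMotzkin k p ∧
        (Finset.univ.filter (fun i => (p i : ℤ) - 1 = 1)).card = a}
      = k.choose a * (k - 1).choose a / (a + 1) :=
  (AltM.main_count k a).trans (AltM.Aset_card_final k a)
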